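/- Let (S_i, S_j, S_k) be a {-1,1}³-valued random vector such that S_j uniformly dominates S_k for S_i, and let σ be any strategy (random map {-1,1} → {-1,1}) applied independently to S_j and S_k to produce Ŝ_j, Ŝ_k. Then for each s_i ∈ {-1,1}, E[ŝ_i·Ŝ_j - ŝ_i·Ŝ_k | S_i = s_i] = 2δ(σ(s_i, ŝ_i) - σ(-s_i, ŝ_i)) where δ = Pr[S_j = s_i | S_i = s_i] - Pr[S_k = s_i | S_i = s_i] > 0; consequently the argmax over ŝ_i of the conditional expected payment equals the argmax over ŝ_i of σ(s_i, ŝ_i) - σ(-s_i, ŝ_i). -/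

import Mathlib

open Finset

/-- Sign value of a boolean signal: `true ↦ 1`, `false ↦ -1`. -/
def sgn (b : Bool) : ℝ := if b then 1 else -1

/-- When agents `j` and `k` both apply a strategy `σ` (independently) to their
signals and `S_j` uniformly dominates `S_k` for `S_i`, the conditional expected
bonus-penalty payment of agent `i` reporting `ŝ_i` on signal `s_i` equals
`2 δ (σ(s_i, ŝ_i) - σ(-s_i, ŝ_i))` with
`δ = Pr[S_j = s_i ∣ S_i = s_i] - Pr[S_k = s_i ∣ S_i = s_i] > 0`; hence the best
response maximizes `σ(s_i, ·) - σ(-s_i, ·)`. -/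
theorem stmt_7 (p : Bool → Bool → Bool → ℝ)
    (hpos : ∀ s j k, 0 ≤ p s j k)
    (hsum : ∑ s, ∑ j, ∑ k, p s j k = 1)
    (hmarg : ∀ s, 0 < ∑ j, ∑ k, p s j k)
    (hud1 : (∑ k, p true true k) / (∑ j, ∑ k, p true j k) >
            (∑ j, p true j true) / (∑ j, ∑ k, p true j k))
    (hud2 : (∑ k, p false false k) / (∑ j, ∑ k, p false j k) >
            (∑ j, p false j false) / (∑ j, ∑ k, p false j k))
    (σ : Bool → Bool → ℝ)
    (hσpos : ∀ s t, 0 ≤ σ s t) (hσsum : ∀ s, ∑ t, σ s t = 1) :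
    ∀ si : Bool,
      0 < (∑ k, p si si k) / (∑ j, ∑ k, p si j k) -
          (∑ j, p si j si) / (∑ j, ∑ k, p si j k) ∧
      (∀ shat : Bool,
        (∑ j, ∑ k, ∑ b, ∑ c,
          p si j k * σ j b * σ k c * (sgn shat * sgn b - sgn shat * sgn c)) /
          (∑ j, ∑ k, p si j k) =
        2 * ((∑ k, p si si k) / (∑ j, ∑ k, p si j k) -
             (∑ j, p si j si) / (∑ j, ∑ k, p si j k)) *
          (σ si shat - σ (!si) shat)) ∧
      ((∑ j, ∑ k, ∑ b, ∑ c,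
          p si j k * σ j b * σ k c * (sgn true * sgn b - sgn true * sgn c)) /
          (∑ j, ∑ k, p si j k) >
       (∑ j, ∑ k, ∑ b, ∑ c,
          p si j k * σ j b * σ k c * (sgn false * sgn b - sgn false * sgn c)) /
          (∑ j, ∑ k, p si j k) ↔
       σ si true - σ (!si) true > σ si false - σ (!si) false) := by
  intro si
  have hZ := hmarg si
  have hZ' : (∑ j, ∑ k, p si j k) ≠ 0 := ne_of_gt hZ
  have hσf : ∀ s, σ s false = 1 - σ s true := by
    intro s
    have := hσsum s
    simp [Fintype.sum_bool] at this
    linarith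
  have hδ : 0 < (∑ k, p si si k) / (∑ j, ∑ k, p si j k) -
      (∑ j, p si j si) / (∑ j, ∑ k, p si j k) := by
    cases si
    · linarith [hud2]
    · linarith [hud1]
  refine ⟨hδ, ?_, ?_⟩
  · intro shat
    cases si <;> cases shat <;>
      (simp only [Fintype.sum_bool, sgn, Bool.not_false, Bool.not_true,
        if_true, if_false, Bool.false_eq_true, hσf] at * <;> field_simp <;> ring)
  · have key : ∀ shat : Bool,
        (∑ j, ∑ k, ∑ b, ∑ c,
          p si j k * σ j b * σ k c * (sgn shat * sgn b - sgn shat * sgn c)) /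
          (∑ j, ∑ k, p si j k) =
        2 * ((∑ k, p si si k) / (∑ j, ∑ k, p si j k) -
             (∑ j, p si j si) / (∑ j, ∑ k, p si j k)) *
          (σ si shat - σ (!si) shat) := by
      intro shat
      cases si <;> cases shat <;>
        (simp only [Fintype.sum_bool, sgn, Bool.not_false, Bool.not_true,
          if_true, if_false, Bool.false_eq_true, hσf] at * <;> field_simp <;> ring)
    rw [key true, key false]
    constructor
    · intro h
      have h2 : 0 < 2 * ((∑ k, p si si k) / (∑ j, ∑ k, p si j k) -
          (∑ j, p si j si) / (∑ j, ∑ k, p si j k)) := by linarith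
      exact lt_of_mul_lt_mul_left (by linarith) (le_of_lt h2)
    · intro h
      have h2 : 0 < 2 * ((∑ k, p si si k) / (∑ j, ∑ k, p si j k) -
          (∑ j, p si j si) / (∑ j, ∑ k, p si j k)) := by linarith
      exact (mul_lt_mul_iff_right₀ h2).mpr h
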